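/- arXiv:1701.06263 — 2 statements merged into one kernel-verified Lean document; each statement's English description precedes it below -/
import Mathlib

section
/- Let C ∈ S(K) be symmetric. Then the operator 𝒞_C : H(K) → H(K) defined by (𝒞_C f)(s) = ⟨C(s,·), f⟩_{H(K)} is a Hilbert–Schmidt operator, and its Hilbert–Schmidt norm equals ‖C‖_{H(K⊗K)}. -/
open scoped RealInnerProductSpace ENNReal

noncomputable section HSAux

namespace HSAux

variable {ι κ : Type*}

lemma summable_sq (f : lp (fun _ : ι => ℝ) 2) : Summable fun i => ‖f i‖ ^ 2 := by
  have h := (memℓp_gen_iff (E := fun _ : ι => ℝ) (p := 2) (f := (f : ι → ℝ))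
    (by norm_num)).1 (lp.memℓp f)
  have h2 : ((2 : ℝ≥0∞)).toReal = ((2 : ℕ) : ℝ) := by norm_num
  rw [h2] at h
  simpa [Real.rpow_natCast] using h

lemma tsum_sq (f : lp (fun _ : ι => ℝ) 2) : ∑' i, ‖f i‖ ^ 2 = ‖f‖ ^ 2 := by
  have h := lp.norm_rpow_eq_tsum (E := fun _ : ι => ℝ) (p := 2) (by norm_num) f
  have h2 : ((2 : ℝ≥0∞)).toReal = ((2 : ℕ) : ℝ) := by norm_num
  rw [h2] at h
  simp only [Real.rpow_natCast] at h
  exact h.symm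

lemma summable_norm_mul (x x' : lp (fun _ : ι => ℝ) 2) :
    Summable fun i => ‖x i * x' i‖ := by
  refine Summable.of_nonneg_of_le (fun i => norm_nonneg _) (fun i => ?_)
    (((summable_sq x).add (summable_sq x')).div_const 2)
  rw [norm_mul]
  nlinarith [sq_nonneg (‖x i‖ - ‖x' i‖), norm_nonneg (x i), norm_nonneg (x' i)]

lemma tens_memℓp (x : lp (fun _ : ι => ℝ) 2) (y : lp (fun _ : κ => ℝ) 2) :
    Memℓp (fun p : ι × κ => x p.1 * y p.2) 2 := by
  apply memℓp_gen
  have h2 : ((2 : ℝ≥0∞)).toReal = ((2 : ℕ) : ℝ) := by norm_num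
  rw [h2]
  simp only [Real.rpow_natCast]
  have h := ((summable_sq x).mul_of_nonneg (summable_sq y)
    (fun i => by positivity) (fun j => by positivity))
  refine h.congr fun p => ?_
  rw [norm_mul, mul_pow]

/-- The tensor product of two `ℓ²` elements, as an element of `ℓ²` on the product. -/
def tens (x : lp (fun _ : ι => ℝ) 2) (y : lp (fun _ : κ => ℝ) 2) :
    lp (fun _ : ι × κ => ℝ) 2 :=
  ⟨fun p : ι × κ => x p.1 * y p.2, tens_memℓp x y⟩

@[simp] lemma tens_apply (x : lp (fun _ : ι => ℝ) 2) (y : lp (fun _ : κ => ℝ) 2) (p : ι × κ) :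
    (tens x y : (ι × κ) → ℝ) p = x p.1 * y p.2 := rfl

lemma tens_inner (x x' : lp (fun _ : ι => ℝ) 2) (y y' : lp (fun _ : κ => ℝ) 2) :
    ⟪tens x y, tens x' y'⟫ = ⟪x, x'⟫ * ⟪y, y'⟫ := by
  rw [lp.inner_eq_tsum, lp.inner_eq_tsum, lp.inner_eq_tsum]
  simp only [RCLike.inner_apply, starRingEnd_apply, star_trivial, tens_apply]
  have hy : Summable fun j => y j * y' j := (summable_norm_mul y y').of_norm
  have hsum : Summable fun p : ι × κ => (x p.1 * x' p.1) * (y p.2 * y' p.2) :=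
    (Summable.mul_norm (R := ℝ) (f := fun i => x i * x' i) (g := fun j => y j * y' j)
      (summable_norm_mul x x') (summable_norm_mul y y')).of_norm
  have step1 : ∑' p : ι × κ, (x p.1 * y p.2) * (x' p.1 * y' p.2)
      = ∑' p : ι × κ, (x p.1 * x' p.1) * (y p.2 * y' p.2) := by
    apply tsum_congr; intro p; ring
  have step2 : ∑' p : ι × κ, (x p.1 * x' p.1) * (y p.2 * y' p.2)
      = ∑' i, ∑' j, (x i * x' i) * (y j * y' j) := by
    refine Summable.tsum_prod' hsum ?_
    intro i
    exact hy.mul_left (x i * x' i)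
  have step3 : ∀ i, ∑' j, (x i * x' i) * (y j * y' j) = (x i * x' i) * ∑' j, (y j * y' j) :=
    fun i => tsum_mul_left
  have step0 : ∀ p : ι × κ, x' p.1 * y' p.2 * (x p.1 * y p.2) = (x p.1 * y p.2) * (x' p.1 * y' p.2) :=
    fun p => by ring
  have step0x : ∀ i, x' i * x i = x i * x' i := fun i => mul_comm _ _
  have step0y : ∀ j, y' j * y j = y j * y' j := fun j => mul_comm _ _
  simp only [step0, step0x, step0y]
  rw [step1, step2, tsum_congr step3]
  exact tsum_mul_right

lemma tens_norm (x : lp (fun _ : ι => ℝ) 2) (y : lp (fun _ : κ => ℝ) 2) :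
    ‖tens x y‖ = ‖x‖ * ‖y‖ := by
  have h : ⟪tens x y, tens x y⟫ = (‖x‖ * ‖y‖) * (‖x‖ * ‖y‖) := by
    rw [tens_inner, real_inner_self_eq_norm_mul_norm, real_inner_self_eq_norm_mul_norm]; ring
  rw [real_inner_self_eq_norm_mul_norm] at h
  exact (mul_self_inj (norm_nonneg _) (mul_nonneg (norm_nonneg _) (norm_nonneg _))).1 h

lemma tens_add_left (x x' : lp (fun _ : ι => ℝ) 2) (y : lp (fun _ : κ => ℝ) 2) :
    tens (x + x') y = tens x y + tens x' y := by
  apply lp.ext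
  funext p
  simp [lp.coeFn_add, tens_apply, add_mul]

lemma tens_smul_left (a : ℝ) (x : lp (fun _ : ι => ℝ) 2) (y : lp (fun _ : κ => ℝ) 2) :
    tens (a • x) y = a • tens x y := by
  apply lp.ext
  funext p
  simp [lp.coeFn_smul, tens_apply, mul_assoc]

lemma tens_add_right (x : lp (fun _ : ι => ℝ) 2) (y y' : lp (fun _ : κ => ℝ) 2) :
    tens x (y + y') = tens x y + tens x y' := by
  apply lp.ext
  funext p
  simp [lp.coeFn_add, tens_apply, mul_add]

lemma tens_smul_right (a : ℝ) (x : lp (fun _ : ι => ℝ) 2) (y : lp (fun _ : κ => ℝ) 2) :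
    tens x (a • y) = a • tens x y := by
  apply lp.ext
  funext p
  simp [lp.coeFn_smul, tens_apply]
  ring

/-- `tens` as a continuous bilinear map. -/
def tensCLM : lp (fun _ : ι => ℝ) 2 →L[ℝ] lp (fun _ : κ => ℝ) 2 →L[ℝ]
    lp (fun _ : ι × κ => ℝ) 2 :=
  LinearMap.mkContinuous₂
    (LinearMap.mk₂ ℝ tens tens_add_left tens_smul_left tens_add_right tens_smul_right)
    1 (fun x y => by rw [LinearMap.mk₂_apply, tens_norm, one_mul])

@[simp] lemma tensCLM_apply (x : lp (fun _ : ι => ℝ) 2) (y : lp (fun _ : κ => ℝ) 2) :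
    tensCLM x y = tens x y := rfl

end HSAux

end HSAux

/-- The operator `𝒞_C` associated with a symmetric element `C` of the tensor-product
RKHS `H(K ⊗ K)` is Hilbert–Schmidt, with Hilbert–Schmidt norm equal to
`‖C‖_{H(K⊗K)}`.  Model: `H` is the RKHS `H(K)` of functions on `T`, realized through
its kernel sections `φ t = K(t,·)` with dense span (so `K s t = ⟪φ s, φ t⟫` and
functions in `H(K)` have values `t ↦ ⟪φ t, f⟫`); `H2` is the tensor-product RKHS
`H(K ⊗ K)` realized through its kernel sections `φ₂ (s,t)` with dense span, so that
`C(s,t) = ⟪φ₂ (s,t), C⟫`.  The operator `A = 𝒞_C` is characterized by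
`⟪K(s,·), 𝒞_C K(t,·)⟫ = C(s,t)`.  The conclusion: for every Hilbert basis `(e i)` of
`H`, the sum `Σᵢ ‖A eᵢ‖²` converges and its square root (the Hilbert–Schmidt norm of
`A`) equals `‖C‖`. -/
theorem operator_is_hilbert_schmidt_with_norm
    {T : Type*} {H H2 : Type*}
    [NormedAddCommGroup H] [InnerProductSpace ℝ H] [CompleteSpace H]
    [NormedAddCommGroup H2] [InnerProductSpace ℝ H2] [CompleteSpace H2]
    (φ : T → H)
    (hφdense : (Submodule.span ℝ (Set.range φ)).topologicalClosure = ⊤)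
    (φ₂ : T × T → H2)
    (hφ₂dense : (Submodule.span ℝ (Set.range φ₂)).topologicalClosure = ⊤)
    (hker : ∀ p p' : T × T, ⟪φ₂ p, φ₂ p'⟫ = ⟪φ p.1, φ p'.1⟫ * ⟪φ p.2, φ p'.2⟫)
    (C : H2)
    (hCsym : ∀ s t : T, ⟪φ₂ (s, t), C⟫ = ⟪φ₂ (t, s), C⟫)
    (A : H →L[ℝ] H)
    (hA : ∀ s t : T, ⟪φ s, A (φ t)⟫ = ⟪φ₂ (s, t), C⟫)
    {ι : Type*} (b : HilbertBasis ι ℝ H) :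
    Summable (fun i => ‖A (b i)‖ ^ 2) ∧
      Real.sqrt (∑' i, ‖A (b i)‖ ^ 2) = ‖C‖ := by
  classical
  have hdense1 : Dense ((Submodule.span ℝ (Set.range φ) : Submodule ℝ H) : Set H) :=
    Submodule.dense_iff_topologicalClosure_eq_top.2 hφdense
  have hdense2 : Dense ((Submodule.span ℝ (Set.range φ₂) : Submodule ℝ H2) : Set H2) :=
    Submodule.dense_iff_topologicalClosure_eq_top.2 hφ₂dense
  obtain ⟨x, hxmem, hxlim⟩ := mem_closure_iff_seq_limit.1 (hdense2 C)
  choose c hc using fun n => Finsupp.mem_span_range_iff_exists_finsupp.1 (hxmem n)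
  set V : ((T × T) →₀ ℝ) → lp (fun _ : ι × ι => ℝ) 2 :=
    fun d => d.sum fun p a => a • HSAux.tens (b.repr (φ p.1)) (b.repr (φ p.2)) with hV
  set X : ((T × T) →₀ ℝ) → H2 := fun d => d.sum fun p a => a • φ₂ p with hXdef
  have hXc : ∀ n, X (c n) = x n := fun n => hc n
  have hVX : ∀ d d', ⟪V d, V d'⟫ = ⟪X d, X d'⟫ := by
    intro d d'
    simp only [hV, hXdef, Finsupp.sum]
    rw [sum_inner, sum_inner]
    refine Finset.sum_congr rfl fun p _ => ?_
    rw [inner_sum, inner_sum]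
    refine Finset.sum_congr rfl fun q _ => ?_
    rw [real_inner_smul_left, real_inner_smul_left, real_inner_smul_right, real_inner_smul_right,
      HSAux.tens_inner, LinearIsometryEquiv.inner_map_map, LinearIsometryEquiv.inner_map_map,
      ← hker p q]
  have hnormVX : ∀ d d', ‖V d - V d'‖ = ‖X d - X d'‖ := by
    intro d d'
    have h1 : ⟪V d - V d', V d - V d'⟫ = ⟪X d - X d', X d - X d'⟫ := by
      simp only [inner_sub_left, inner_sub_right, hVX]
    rw [real_inner_self_eq_norm_mul_norm, real_inner_self_eq_norm_mul_norm] at h1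
    exact (mul_self_inj (norm_nonneg _) (norm_nonneg _)).1 h1
  have hCauchy : CauchySeq fun n => V (c n) := by
    rw [Metric.cauchySeq_iff]
    have hx' := hxlim.cauchySeq
    rw [Metric.cauchySeq_iff] at hx'
    intro ε hε
    obtain ⟨N, hN⟩ := hx' ε hε
    refine ⟨N, fun m hm n hn => ?_⟩
    have h := hN m hm n hn
    rwa [dist_eq_norm, ← hXc m, ← hXc n, ← hnormVX, ← dist_eq_norm] at h
  obtain ⟨v, hv⟩ := cauchySeq_tendsto_of_complete hCauchy
  have hnormseq : ∀ n, ‖V (c n)‖ = ‖x n‖ := by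
    intro n
    have h1 := hVX (c n) (c n)
    rw [hXc n, real_inner_self_eq_norm_mul_norm, real_inner_self_eq_norm_mul_norm] at h1
    exact (mul_self_inj (norm_nonneg _) (norm_nonneg _)).1 h1
  have hvnorm : ‖v‖ = ‖C‖ := by
    have h1 : Filter.Tendsto (fun n => ‖V (c n)‖) Filter.atTop (nhds ‖v‖) := hv.norm
    have h2 : Filter.Tendsto (fun n => ‖x n‖) Filter.atTop (nhds ‖C‖) := hxlim.norm
    rw [funext hnormseq] at h1
    exact tendsto_nhds_unique h1 h2
  -- Step 1: the inner product of `v` against elementary tensors of kernel sections.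
  have hst1 : ∀ s t : T, ⟪v, HSAux.tens (b.repr (φ s)) (b.repr (φ t))⟫ = ⟪φ₂ (s, t), C⟫ := by
    intro s t
    have hsingle : V (Finsupp.single (s, t) 1) = HSAux.tens (b.repr (φ s)) (b.repr (φ t)) := by
      simp only [hV]
      rw [Finsupp.sum_single_index] <;> simp
    have h1 : Filter.Tendsto (fun n => ⟪V (c n), HSAux.tens (b.repr (φ s)) (b.repr (φ t))⟫)
        Filter.atTop (nhds ⟪v, HSAux.tens (b.repr (φ s)) (b.repr (φ t))⟫) :=
      hv.inner tendsto_const_nhds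
    have h2 : ∀ n, ⟪V (c n), HSAux.tens (b.repr (φ s)) (b.repr (φ t))⟫ = ⟪x n, φ₂ (s, t)⟫ := by
      intro n
      rw [← hsingle, hVX, hXc]
      congr 1
      simp only [hXdef]
      rw [Finsupp.sum_single_index] <;> simp
    have h3 : Filter.Tendsto (fun n => ⟪x n, φ₂ (s, t)⟫) Filter.atTop
        (nhds ⟪C, φ₂ (s, t)⟫) := hxlim.inner tendsto_const_nhds
    rw [funext h2] at h1
    have h4 := tendsto_nhds_unique h1 h3
    rw [h4, real_inner_comm]
  set R : H →L[ℝ] lp (fun _ : ι => ℝ) 2 := b.repr.toLinearIsometry.toContinuousLinearMap with hR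
  have hRapp : ∀ u : H, R u = b.repr u := fun u => rfl
  -- Step 2: extend in the first variable.
  have hst2 : ∀ (t : T) (u : H), ⟪v, HSAux.tens (b.repr u) (b.repr (φ t))⟫ = ⟪u, A (φ t)⟫ := by
    intro t
    have hFG : (innerSL ℝ (A (φ t)) : H →L[ℝ] ℝ)
        = (innerSL ℝ v).comp
            ((ContinuousLinearMap.flip (HSAux.tensCLM (ι := ι) (κ := ι))
              (b.repr (φ t))).comp R) := by
      refine ContinuousLinearMap.ext_on hdense1 ?_
      rintro _ ⟨s, rfl⟩
      simp only [ContinuousLinearMap.comp_apply, innerSL_apply_apply, ContinuousLinearMap.flip_apply,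
        HSAux.tensCLM_apply, hRapp]
      calc ⟪A (φ t), φ s⟫ = ⟪φ s, A (φ t)⟫ := real_inner_comm _ _
        _ = ⟪φ₂ (s, t), C⟫ := hA s t
        _ = ⟪v, HSAux.tens (b.repr (φ s)) (b.repr (φ t))⟫ := (hst1 s t).symm
    intro u
    have h := DFunLike.congr_fun hFG u
    simp only [ContinuousLinearMap.comp_apply, innerSL_apply_apply, ContinuousLinearMap.flip_apply,
      HSAux.tensCLM_apply, hRapp] at h
    rw [← h]
    exact real_inner_comm _ _
  -- Step 3: extend in the second variable.
  have hst3 : ∀ u w : H, ⟪v, HSAux.tens (b.repr u) (b.repr w)⟫ = ⟪u, A w⟫ := by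
    intro u
    have hFG : ((innerSL ℝ u).comp A : H →L[ℝ] ℝ)
        = (innerSL ℝ v).comp ((HSAux.tensCLM (b.repr u)).comp R) := by
      refine ContinuousLinearMap.ext_on hdense1 ?_
      rintro _ ⟨t, rfl⟩
      simp only [ContinuousLinearMap.comp_apply, innerSL_apply_apply, HSAux.tensCLM_apply, hRapp]
      exact (hst2 t u).symm
    intro w
    have h := DFunLike.congr_fun hFG w
    simp only [ContinuousLinearMap.comp_apply, innerSL_apply_apply, HSAux.tensCLM_apply, hRapp] at h
    exact h.symm
  -- Coordinates of `v` are the matrix entries of `A`.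
  have hcoord : ∀ p : ι × ι, (v : (ι × ι) → ℝ) p = ⟪b p.1, A (b p.2)⟫ := by
    rintro ⟨i, j⟩
    have h := hst3 (b i) (b j)
    rw [b.repr_self, b.repr_self] at h
    have htens : HSAux.tens (lp.single 2 i (1 : ℝ)) (lp.single 2 j (1 : ℝ))
        = lp.single 2 ((i, j) : ι × ι) (1 : ℝ) := by
      apply lp.ext
      funext p
      rcases p with ⟨k, l⟩
      rw [HSAux.tens_apply]
      by_cases hk : k = i
      · by_cases hl : l = j
        · subst hk; subst hl
          rw [lp.single_apply_self, lp.single_apply_self, lp.single_apply_self, one_mul]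
        · rw [lp.single_apply_ne _ _ _ hl, mul_zero,
            lp.single_apply_ne (p := 2) (i := ((i, j) : ι × ι))]
          simp [Prod.ext_iff, hl]
      · rw [lp.single_apply_ne _ _ _ hk, zero_mul,
          lp.single_apply_ne (p := 2) (i := ((i, j) : ι × ι))]
        simp [Prod.ext_iff, hk]
    rw [htens, lp.inner_single_right] at h
    simpa using h
  -- Parseval along columns.
  have hcolfun : ∀ j : ι, (fun i : ι => (v : (ι × ι) → ℝ) (i, j)) = ⇑(b.repr (A (b j))) := by
    intro j
    funext i
    rw [hcoord (i, j), b.repr_apply_apply]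
  have hcolsum : ∀ j : ι, Summable fun i : ι => ‖(v : (ι × ι) → ℝ) (i, j)‖ ^ 2 := by
    intro j
    refine (HSAux.summable_sq (b.repr (A (b j)))).congr fun i => ?_
    rw [congrFun (hcolfun j) i]
  have hcoltsum : ∀ j : ι, ∑' i : ι, ‖(v : (ι × ι) → ℝ) (i, j)‖ ^ 2 = ‖A (b j)‖ ^ 2 := by
    intro j
    calc ∑' i : ι, ‖(v : (ι × ι) → ℝ) (i, j)‖ ^ 2
        = ∑' i : ι, ‖(b.repr (A (b j))) i‖ ^ 2 :=
          tsum_congr fun i => by rw [congrFun (hcolfun j) i]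
      _ = ‖b.repr (A (b j))‖ ^ 2 := HSAux.tsum_sq _
      _ = ‖A (b j)‖ ^ 2 := by rw [LinearIsometryEquiv.norm_map]
  -- Global summability.
  have hsumv : Summable fun p : ι × ι => ‖(v : (ι × ι) → ℝ) p‖ ^ 2 := HSAux.summable_sq v
  have htsumv : ∑' p : ι × ι, ‖(v : (ι × ι) → ℝ) p‖ ^ 2 = ‖C‖ ^ 2 := by
    rw [HSAux.tsum_sq v, hvnorm]
  have hswap : Summable fun q : ι × ι => ‖(v : (ι × ι) → ℝ) (q.2, q.1)‖ ^ 2 := by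
    refine ((Equiv.prodComm ι ι).summable_iff
      (f := fun p : ι × ι => ‖(v : (ι × ι) → ℝ) p‖ ^ 2)).2 hsumv
  have hmarg := (summable_prod_of_nonneg
    (f := fun q : ι × ι => ‖(v : (ι × ι) → ℝ) (q.2, q.1)‖ ^ 2)
    (fun q => by positivity)).1 hswap
  have hsummA : Summable fun j : ι => ‖A (b j)‖ ^ 2 := by
    refine hmarg.2.congr fun j => ?_
    exact hcoltsum j
  refine ⟨hsummA, ?_⟩
  have htsum : ∑' j : ι, ‖A (b j)‖ ^ 2 = ‖C‖ ^ 2 := by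
    have hstep : ∑' q : ι × ι, ‖(v : (ι × ι) → ℝ) (q.2, q.1)‖ ^ 2
        = ∑' j : ι, ∑' i : ι, ‖(v : (ι × ι) → ℝ) (i, j)‖ ^ 2 := by
      refine Summable.tsum_prod' hswap ?_
      exact fun j => hmarg.1 j
    have hequ : ∑' q : ι × ι, ‖(v : (ι × ι) → ℝ) (q.2, q.1)‖ ^ 2
        = ∑' p : ι × ι, ‖(v : (ι × ι) → ℝ) p‖ ^ 2 := by
      exact (Equiv.prodComm ι ι).tsum_eq (fun p : ι × ι => ‖(v : (ι × ι) → ℝ) p‖ ^ 2)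
    calc ∑' j : ι, ‖A (b j)‖ ^ 2
        = ∑' j : ι, ∑' i : ι, ‖(v : (ι × ι) → ℝ) (i, j)‖ ^ 2 :=
          tsum_congr fun j => (hcoltsum j).symm
      _ = ∑' q : ι × ι, ‖(v : (ι × ι) → ℝ) (q.2, q.1)‖ ^ 2 := hstep.symm
      _ = ∑' p : ι × ι, ‖(v : (ι × ι) → ℝ) p‖ ^ 2 := hequ
      _ = ‖C‖ ^ 2 := htsumv
  rw [htsum, Real.sqrt_sq (norm_nonneg C)]
end

section
/- Let ν > 0 and let B be a q × q real symmetric matrix with eigen-decomposition B = P diag(b̃₁,…,b̃_q) Pᵀ, where P is orthogonal. Then the matrix D* = P diag(g_ν(b̃₁),…,g_ν(b̃_q)) Pᵀ, where g_ν(x) = max(x − ν, 0), is the unique minimizer over all q × q real positive semi-definite matrices D of the function (1/2)‖D − B‖_F² + ν‖D‖_*, where ‖·‖_F is the Frobenius norm and ‖D‖_* is the trace norm (the sum of singular values; for positive semi-definite D this equals the trace of D). -/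
open Matrix
/-- The squared Frobenius norm of a real matrix. -/
def frobSq {q : ℕ} (W : Matrix (Fin q) (Fin q) ℝ) : ℝ := ∑ i, ∑ j, (W i j) ^ 2


lemma obj_eq {q : ℕ} (ν : ℝ) (b : Fin q → ℝ) (E : Matrix (Fin q) (Fin q) ℝ) :
    (1/2) * frobSq (E - Matrix.diagonal b) + ν * E.trace =
      ∑ p : Fin q × Fin q, ((1/2)*(E p.1 p.2 - Matrix.diagonal b p.1 p.2)^2 +
        if p.2 = p.1 then ν * E p.1 p.1 else 0) := by
  rw [Fintype.sum_prod_type]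
  simp only [Finset.sum_add_distrib, Finset.sum_ite_eq', Finset.mem_univ, if_true]
  rw [frobSq]
  simp [Matrix.trace, Matrix.diag, Finset.mul_sum, Matrix.sub_apply]

lemma frobSq_eq_trace {q : ℕ} (W : Matrix (Fin q) (Fin q) ℝ) :
    frobSq W = (Wᵀ * W).trace := by
  simp only [frobSq, Matrix.trace, Matrix.diag, Matrix.mul_apply, Matrix.transpose_apply, sq]
  exact Finset.sum_comm

lemma frobSq_conj {q : ℕ} {P : Matrix (Fin q) (Fin q) ℝ} (hP : P * Pᵀ = 1)
    (W : Matrix (Fin q) (Fin q) ℝ) : frobSq (P * W * Pᵀ) = frobSq W := by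
  have hPt : Pᵀ * P = 1 := mul_eq_one_comm.mp hP
  rw [frobSq_eq_trace, frobSq_eq_trace]
  have key : (P * W * Pᵀ)ᵀ * (P * W * Pᵀ) = P * (Wᵀ * W) * Pᵀ := by
    simp only [Matrix.transpose_mul, Matrix.transpose_transpose, Matrix.mul_assoc]
    rw [← Matrix.mul_assoc Pᵀ P, hPt, one_mul]
  rw [key, Matrix.trace_mul_cycle, ← Matrix.mul_assoc, hPt, one_mul]

lemma trace_conj {q : ℕ} {P : Matrix (Fin q) (Fin q) ℝ} (hP : P * Pᵀ = 1)
    (W : Matrix (Fin q) (Fin q) ℝ) : (P * W * Pᵀ).trace = W.trace := by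
  have hPt : Pᵀ * P = 1 := mul_eq_one_comm.mp hP
  rw [Matrix.trace_mul_cycle, hPt, one_mul]

lemma psd_conj {q : ℕ} {P W : Matrix (Fin q) (Fin q) ℝ} (hW : W.PosSemidef) :
    (P * W * Pᵀ).PosSemidef := by
  have := hW.mul_mul_conjTranspose_same P
  simpa [Matrix.conjTranspose_eq_transpose_of_trivial] using this

lemma psd_diag_nonneg {q : ℕ} {W : Matrix (Fin q) (Fin q) ℝ} (hW : W.PosSemidef)
    (i : Fin q) : 0 ≤ W i i := by
  simpa using hW.diag_nonneg (i := i)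

lemma key_le {ν b t : ℝ} (hν : 0 < ν) (ht : 0 ≤ t) :
    (1/2)*(max (b-ν) 0 - b)^2 + ν * max (b-ν) 0 ≤ (1/2)*(t-b)^2 + ν*t := by
  rcases le_or_gt (b - ν) 0 with h | h
  · rw [max_eq_right h]; nlinarith
  · rw [max_eq_left h.le]; nlinarith [sq_nonneg (t - (b - ν))]

lemma key_eq {ν b t : ℝ} (hν : 0 < ν) (ht : 0 ≤ t)
    (h : (1/2)*(t-b)^2 + ν*t = (1/2)*(max (b-ν) 0 - b)^2 + ν * max (b-ν) 0) :
    t = max (b-ν) 0 := by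
  rcases le_or_gt (b - ν) 0 with h' | h'
  · rw [max_eq_right h'] at h ⊢; nlinarith
  · rw [max_eq_left h'.le] at h ⊢; nlinarith [sq_nonneg (t - (b - ν))]

lemma core_term_le {q : ℕ} {ν : ℝ} (hν : 0 < ν) (b : Fin q → ℝ)
    (E : Matrix (Fin q) (Fin q) ℝ) (hd : ∀ i, 0 ≤ E i i) (p : Fin q × Fin q) :
    (1/2)*((Matrix.diagonal (fun i => max (b i - ν) 0)) p.1 p.2 - Matrix.diagonal b p.1 p.2)^2 +
        (if p.2 = p.1 then ν * (Matrix.diagonal (fun i => max (b i - ν) 0)) p.1 p.1 else 0) ≤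
      (1/2)*(E p.1 p.2 - Matrix.diagonal b p.1 p.2)^2 +
        (if p.2 = p.1 then ν * E p.1 p.1 else 0) := by
  obtain ⟨i, j⟩ := p
  by_cases hij : j = i
  · subst hij
    simp only [Matrix.diagonal_apply_eq, if_true]
    exact key_le hν (hd j)
  · have hij' : i ≠ j := fun h => hij h.symm
    simp [Matrix.diagonal_apply_ne _ hij', hij]
    positivity

lemma core_le {q : ℕ} {ν : ℝ} (hν : 0 < ν) (b : Fin q → ℝ)
    (E : Matrix (Fin q) (Fin q) ℝ) (hd : ∀ i, 0 ≤ E i i) :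
    (1/2) * frobSq (Matrix.diagonal (fun i => max (b i - ν) 0) - Matrix.diagonal b)
        + ν * (Matrix.diagonal (fun i => max (b i - ν) 0)).trace ≤
      (1/2) * frobSq (E - Matrix.diagonal b) + ν * E.trace := by
  rw [obj_eq, obj_eq]
  exact Finset.sum_le_sum fun p _ => core_term_le hν b E hd p

lemma core_eq {q : ℕ} {ν : ℝ} (hν : 0 < ν) (b : Fin q → ℝ)
    (E : Matrix (Fin q) (Fin q) ℝ) (hd : ∀ i, 0 ≤ E i i)
    (heq : (1/2) * frobSq (E - Matrix.diagonal b) + ν * E.trace =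
      (1/2) * frobSq (Matrix.diagonal (fun i => max (b i - ν) 0) - Matrix.diagonal b)
        + ν * (Matrix.diagonal (fun i => max (b i - ν) 0)).trace) :
    E = Matrix.diagonal (fun i => max (b i - ν) 0) := by
  rw [obj_eq, obj_eq] at heq
  have hall := (Finset.sum_eq_sum_iff_of_le
    (fun p _ => core_term_le hν b E hd p)).mp heq.symm
  ext i j
  have h := (hall (i, j) (Finset.mem_univ _)).symm
  by_cases hij : j = i
  · subst hij
    simp only [Matrix.diagonal_apply_eq, if_true] at h ⊢
    exact key_eq hν (hd j) h
  · have hij' : i ≠ j := fun h => hij h.symm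
    simp only [Matrix.diagonal_apply_ne _ hij', if_neg hij, add_zero, sub_zero] at h ⊢
    nlinarith [sq_nonneg (E i j)]

/-- Proposition 1: the proximal operator of the trace norm restricted to positive
semi-definite matrices.  If `B = P diag(b) Pᵀ` with `P` orthogonal, then
`D* = P diag(max (b i - ν) 0) Pᵀ` is the unique minimizer of
`(1/2)‖D - B‖_F² + ν ‖D‖_*` over positive semi-definite `D` (for such `D` the trace
norm `‖D‖_*` equals the trace of `D`). -/
theorem prox_trace_norm_psd {q : ℕ} (ν : ℝ) (hν : 0 < ν)
    (B P : Matrix (Fin q) (Fin q) ℝ) (b : Fin q → ℝ)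
    (hBsymm : B.IsSymm) (hP : P * Pᵀ = 1)
    (hB : B = P * Matrix.diagonal b * Pᵀ)
    (Dstar : Matrix (Fin q) (Fin q) ℝ)
    (hDstar : Dstar = P * Matrix.diagonal (fun i => max (b i - ν) 0) * Pᵀ) :
    Dstar.PosSemidef ∧
      (∀ D : Matrix (Fin q) (Fin q) ℝ, D.PosSemidef →
        (1 / 2) * frobSq (Dstar - B) + ν * Dstar.trace ≤
          (1 / 2) * frobSq (D - B) + ν * D.trace) ∧
      (∀ D : Matrix (Fin q) (Fin q) ℝ, D.PosSemidef →
        (1 / 2) * frobSq (D - B) + ν * D.trace =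
          (1 / 2) * frobSq (Dstar - B) + ν * Dstar.trace → D = Dstar) := by
  have hPt : Pᵀ * P = 1 := mul_eq_one_comm.mp hP
  set t : Fin q → ℝ := fun i => max (b i - ν) 0 with ht
  -- objective of Dstar in diagonal form
  have hDstarSub : Dstar - B = P * (Matrix.diagonal t - Matrix.diagonal b) * Pᵀ := by
    rw [hDstar, hB, Matrix.mul_sub, Matrix.sub_mul]
  have hDstarObj : (1 / 2) * frobSq (Dstar - B) + ν * Dstar.trace =
      (1/2) * frobSq (Matrix.diagonal t - Matrix.diagonal b)
        + ν * (Matrix.diagonal t).trace := by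
    rw [hDstarSub, frobSq_conj hP, hDstar, trace_conj hP]
  -- facts for a general PSD D
  have hE : ∀ D : Matrix (Fin q) (Fin q) ℝ, D.PosSemidef →
      ∃ E : Matrix (Fin q) (Fin q) ℝ, D = P * E * Pᵀ ∧ (∀ i, 0 ≤ E i i) := by
    intro D hD
    refine ⟨Pᵀ * D * P, ?_, fun i => psd_diag_nonneg ?_ i⟩
    · have h1 : P * (Pᵀ * D * P) * Pᵀ = (P * Pᵀ) * D * (P * Pᵀ) := by
        simp only [Matrix.mul_assoc]
      rw [h1, hP, one_mul, mul_one]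
    · have := psd_conj (P := Pᵀ) hD
      simpa using this
  refine ⟨?_, ?_, ?_⟩
  · rw [hDstar]
    exact psd_conj (Matrix.PosSemidef.diagonal fun i => le_max_right _ _)
  · intro D hD
    obtain ⟨E, hDE, hd⟩ := hE D hD
    have hsub : D - B = P * (E - Matrix.diagonal b) * Pᵀ := by
      rw [hDE, hB, Matrix.mul_sub, Matrix.sub_mul]
    rw [hDstarObj, hsub, frobSq_conj hP, hDE, trace_conj hP]
    exact core_le hν b E hd
  · intro D hD heq
    obtain ⟨E, hDE, hd⟩ := hE D hD
    have hsub : D - B = P * (E - Matrix.diagonal b) * Pᵀ := by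
      rw [hDE, hB, Matrix.mul_sub, Matrix.sub_mul]
    rw [hDstarObj, hsub, frobSq_conj hP, hDE, trace_conj hP] at heq
    have : E = Matrix.diagonal t := core_eq hν b E hd heq
    rw [hDE, this, hDstar]
end
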